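/- arXiv:1811.05876 — 9 statements merged into one kernel-verified Lean document; each statement's English description precedes it below -/
import Mathlib

section
/- In a regular multi-pointed category (C, N) with N-kernels, every star (λ₁, λ₂) : X ⇉ Y factorises, uniquely up to isomorphism, as a regular epimorphism e : X → Z followed by a monic star (μ₁, μ₂) : Z ⇉ Y, i.e. λ₁ = μ₁ e, λ₂ = μ₂ e with (μ₁, μ₂) jointly monomorphic and μ₁ ∈ N. -/
open CategoryTheory CategoryTheory.Limits

universe v u

namespace StarReg

variable {C : Type u} [Category.{v} C]

/-- An ideal of morphisms in the sense of Ehresmann. -/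
def IsIdealClass (N : MorphismProperty C) : Prop :=
  (∀ ⦃X Y Z : C⦄ (f : X ⟶ Y) (g : Y ⟶ Z), N f → N (f ≫ g)) ∧
  (∀ ⦃X Y Z : C⦄ (f : X ⟶ Y) (g : Y ⟶ Z), N g → N (f ≫ g))

/-- `k` is an `N`-kernel of `f`. -/
def IsNKernel (N : MorphismProperty C) {K X Y : C} (k : K ⟶ X) (f : X ⟶ Y) : Prop :=
  N (k ≫ f) ∧ ∀ ⦃L : C⦄ (g : L ⟶ X), N (g ≫ f) → ∃! μ : L ⟶ K, μ ≫ k = g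

def HasNKernels (N : MorphismProperty C) : Prop :=
  ∀ ⦃X Y : C⦄ (f : X ⟶ Y), ∃ (K : C) (k : K ⟶ X), IsNKernel N k f

/-- Every morphism factors as a regular epimorphism followed by a monomorphism. -/
def RegEpiMonoFactorisations (C : Type u) [Category.{v} C] : Prop :=
  ∀ ⦃X Y : C⦄ (f : X ⟶ Y), ∃ (Z : C) (e : X ⟶ Z) (m : Z ⟶ Y),
    Nonempty (RegularEpi e) ∧ Mono m ∧ e ≫ m = f

/-- Regular epimorphisms are stable under pullback. -/
def RegEpisPullbackStable (C : Type u) [Category.{v} C] : Prop :=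
  ∀ ⦃P X Y Z : C⦄ (fst : P ⟶ X) (snd : P ⟶ Y) (f : X ⟶ Z) (g : Y ⟶ Z),
    IsPullback fst snd f g → Nonempty (RegularEpi g) → Nonempty (RegularEpi fst)

/-- A star: a pair of parallel morphisms whose first component lies in `N`. -/
structure Star (N : MorphismProperty C) (X : C) where
  T : C
  a : T ⟶ X
  b : T ⟶ X
  ha : N a

/-- A monic star: the pair is jointly monomorphic. -/
def Star.Monic {N : MorphismProperty C} {X : C} (s : Star N X) : Prop :=
  ∀ ⦃W : C⦄ (u v : W ⟶ s.T), u ≫ s.a = v ≫ s.a → u ≫ s.b = v ≫ s.b → u = v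

/-- `s` is the kernel star of `f`. -/
def IsKernelStar {N : MorphismProperty C} {X Y : C} (f : X ⟶ Y) (s : Star N X) : Prop :=
  s.a ≫ f = s.b ≫ f ∧
  ∀ t : Star N X, t.a ≫ f = t.b ≫ f →
    ∃! u : t.T ⟶ s.T, u ≫ s.a = t.a ∧ u ≫ s.b = t.b

/-- `t` is the (regular epi, monic star) image of the star `s` along `f`. -/
def IsImageFact {N : MorphismProperty C} {X Y : C} (f : X ⟶ Y) (s : Star N X)
    (t : Star N Y) : Prop :=
  t.Monic ∧ ∃ e : s.T ⟶ t.T,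
    Nonempty (RegularEpi e) ∧ e ≫ t.a = s.a ≫ f ∧ e ≫ t.b = s.b ≫ f

/-- `f` is a coequaliser of the star `s`. -/
def IsStarCoequalizer {N : MorphismProperty C} {X Q : C} (s : Star N X) (f : X ⟶ Q) : Prop :=
  s.a ≫ f = s.b ≫ f ∧
  ∀ ⦃W : C⦄ (h : X ⟶ W), s.a ≫ h = s.b ≫ h → ∃! u : Q ⟶ W, f ≫ u = h

/-- `s` is the star `Δ*_X` of the discrete relation on `X`. -/
def IsDeltaStar {N : MorphismProperty C} {X : C} (s : Star N X) : Prop :=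
  s.a = s.b ∧ IsNKernel N s.a (𝟙 X)

def RegEpisAreStarCoequalizers (N : MorphismProperty C) : Prop :=
  ∀ ⦃X Y : C⦄ (f : X ⟶ Y), Nonempty (RegularEpi f) →
    ∃ s : Star N X, IsStarCoequalizer s f

/-- A star-regular category: regular multi-pointed with `N`-kernels, every regular
epimorphism a coequaliser of a star. -/
def StarRegular (N : MorphismProperty C) : Prop :=
  IsIdealClass N ∧ HasNKernels N ∧ RegEpiMonoFactorisations C ∧
    RegEpisPullbackStable C ∧ RegEpisAreStarCoequalizers N

def HasKernelStarCoequalizers (N : MorphismProperty C) : Prop :=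
  ∀ ⦃X Y : C⦄ (f : X ⟶ Y) (s : Star N X), IsKernelStar f s →
    ∃ (Q : C) (q : X ⟶ Q), IsStarCoequalizer s q

/-- `f` is saturating: the image of `Δ*` along `f` is `Δ*`. -/
def Saturating (N : MorphismProperty C) {X Y : C} (f : X ⟶ Y) : Prop :=
  ∀ (s : Star N X) (t : Star N Y), IsDeltaStar s → IsImageFact f s t → IsDeltaStar t

/-- The diamond `e ≫ g = f ≫ h` is right saturated: `f(E*) = H*`. -/
def RightSaturated (N : MorphismProperty C) {X Y Z W : C}
    (e : X ⟶ Z) (f : X ⟶ Y) (_g : Z ⟶ W) (h : Y ⟶ W) : Prop :=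
  ∀ (s : Star N X) (t : Star N Y), IsKernelStar e s → IsImageFact f s t → IsKernelStar h t

/-- The diamond `e ≫ g = f ≫ h` is left saturated: `e(F*) = G*`. -/
def LeftSaturated (N : MorphismProperty C) {X Y Z W : C}
    (e : X ⟶ Z) (f : X ⟶ Y) (g : Z ⟶ W) (_h : Y ⟶ W) : Prop :=
  ∀ (s : Star N X) (t : Star N Z), IsKernelStar f s → IsImageFact e s t → IsKernelStar g t

/-- `s` is a kernel star (of some morphism). -/
def IsAKernelStar {N : MorphismProperty C} {X : C} (s : Star N X) : Prop :=
  ∃ (W : C) (w : X ⟶ W), IsKernelStar w s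

/-- Inclusion of stars on the same object. -/
def StarLE {N : MorphismProperty C} {X : C} (s t : Star N X) : Prop :=
  ∃ m : s.T ⟶ t.T, m ≫ t.a = s.a ∧ m ≫ t.b = s.b

/-- Property (*): images along coequalisers of smaller kernel stars of kernel stars are
kernel stars. -/
def PropertyStar (N : MorphismProperty C) : Prop :=
  ∀ ⦃A Q : C⦄ (F G : Star N A) (f : A ⟶ Q),
    IsKernelStar f F → IsStarCoequalizer F f → IsAKernelStar G → StarLE F G →
    ∀ t : Star N Q, IsImageFact f G t → IsAKernelStar t

/-- `σ` (with comparison `j`) is the star-pullback of `τ` along `g`. -/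
def IsStarPullback {N : MorphismProperty C} {X Y : C} (g : X ⟶ Y) (τ : Star N Y)
    (σ : Star N X) (j : σ.T ⟶ τ.T) : Prop :=
  σ.a ≫ g = j ≫ τ.a ∧ σ.b ≫ g = j ≫ τ.b ∧
  ∀ (ρ : Star N X) (w : ρ.T ⟶ τ.T), ρ.a ≫ g = w ≫ τ.a → ρ.b ≫ g = w ≫ τ.b →
    ∃! h : ρ.T ⟶ σ.T, h ≫ σ.a = ρ.a ∧ h ≫ σ.b = ρ.b ∧ h ≫ j = w

def HasRegEpiPushouts (C : Type u) [Category.{v} C] : Prop :=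
  ∀ ⦃X Y Z : C⦄ (f : X ⟶ Y) (g : X ⟶ Z), Nonempty (RegularEpi f) → Nonempty (RegularEpi g) →
    ∃ (W : C) (p : Y ⟶ W) (q : Z ⟶ W), IsPushout f g p q

end StarReg

open CategoryTheory CategoryTheory.Limits StarReg in
/-- In a regular multi-pointed category with N-kernels, every star factorises, uniquely up
to isomorphism, as a regular epimorphism followed by a monic star. -/
theorem statement2 {C : Type u} [Category.{v} C] (N : MorphismProperty C)
    (hfl : HasFiniteLimits C) (hN : IsIdealClass N) (hker : HasNKernels N)
    (hfac : RegEpiMonoFactorisations C) (hpb : RegEpisPullbackStable C)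
    {X Y : C} (l₁ l₂ : X ⟶ Y) (hl : N l₁) :
    ∃ (Z : C) (e : X ⟶ Z) (μ₁ μ₂ : Z ⟶ Y),
      Nonempty (RegularEpi e) ∧ N μ₁ ∧
      (∀ ⦃W : C⦄ (u v : W ⟶ Z), u ≫ μ₁ = v ≫ μ₁ → u ≫ μ₂ = v ≫ μ₂ → u = v) ∧
      e ≫ μ₁ = l₁ ∧ e ≫ μ₂ = l₂ ∧
      (∀ (Z' : C) (e' : X ⟶ Z') (μ₁' μ₂' : Z' ⟶ Y),
        Nonempty (RegularEpi e') → N μ₁' →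
        (∀ ⦃W : C⦄ (u v : W ⟶ Z'), u ≫ μ₁' = v ≫ μ₁' → u ≫ μ₂' = v ≫ μ₂' → u = v) →
        e' ≫ μ₁' = l₁ → e' ≫ μ₂' = l₂ →
        ∃ i : Z ≅ Z', e ≫ i.hom = e' ∧ i.hom ≫ μ₁' = μ₁ ∧ i.hom ≫ μ₂' = μ₂) := by

  haveI := hfl
  -- N-kernel of the identity: membership in N is factoring through k
  obtain ⟨K, k, hk1, hk2⟩ := hker (𝟙 Y)
  have hkN : N k := by simpa using hk1
  -- regular epi - mono factorisation of ⟨l₁, l₂⟩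
  obtain ⟨Z, e, m, ⟨hre⟩, hm, hem⟩ := hfac (prod.lift l₁ l₂)
  haveI : IsRegularEpi e := isRegularEpi_of_regularEpi hre
  haveI : Mono m := hm
  set μ₁ : Z ⟶ Y := m ≫ prod.fst with hμ₁
  set μ₂ : Z ⟶ Y := m ≫ prod.snd with hμ₂
  have he1 : e ≫ μ₁ = l₁ := by rw [hμ₁, ← Category.assoc, hem]; exact prod.lift_fst _ _
  have he2 : e ≫ μ₂ = l₂ := by rw [hμ₂, ← Category.assoc, hem]; exact prod.lift_snd _ _
  -- N μ₁
  obtain ⟨u, hu, -⟩ := hk2 l₁ (by simpa using hl)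
  have hlr : hre.left ≫ l₁ = hre.right ≫ l₁ := by
    simp only [← he1, ← Category.assoc, hre.w]
  have hpq : hre.left ≫ u = hre.right ≫ u := by
    obtain ⟨w, -, hwu⟩ := hk2 (hre.left ≫ l₁)
      (by simpa using hN.2 hre.left l₁ hl)
    have h1 := hwu (hre.left ≫ u) (show _ ≫ k = _ by rw [Category.assoc, hu])
    have h2 := hwu (hre.right ≫ u) (show _ ≫ k = _ by rw [Category.assoc, hu, hlr])
    rw [h1, h2]
  set v : Z ⟶ K := Cofork.IsColimit.desc hre.isColimit u hpq with hv
  have hev : e ≫ v = u := by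
    simpa using Cofork.IsColimit.π_desc' hre.isColimit u hpq
  have hμ₁v : μ₁ = v ≫ k := by
    have : e ≫ v ≫ k = e ≫ μ₁ := by
      rw [← Category.assoc, hev, hu, he1]
    exact ((cancel_epi e).mp this).symm
  have hNμ₁ : N μ₁ := by rw [hμ₁v]; exact hN.2 v k hkN
  -- joint mono
  have hjm : ∀ ⦃W : C⦄ (p q : W ⟶ Z), p ≫ μ₁ = q ≫ μ₁ → p ≫ μ₂ = q ≫ μ₂ → p = q := by
    intro W p q h1 h2
    have : p ≫ m = q ≫ m := by
      apply Limits.prod.hom_ext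
      · simpa [hμ₁] using h1
      · simpa [hμ₂] using h2
    exact (cancel_mono m).mp this
  refine ⟨Z, e, μ₁, μ₂, ⟨hre⟩, hNμ₁, hjm, he1, he2, ?_⟩
  -- uniqueness
  intro Z' e' μ₁' μ₂' ⟨hre'⟩ _ hjm' he1' he2'
  haveI : IsRegularEpi e' := isRegularEpi_of_regularEpi hre'
  set m' : Z' ⟶ Y ⨯ Y := prod.lift μ₁' μ₂' with hm'def
  haveI hm' : Mono m' := by
    constructor
    intro W p q h
    apply hjm'
    · have := congrArg (· ≫ (prod.fst : Y ⨯ Y ⟶ Y)) h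
      exact ((Category.assoc _ _ _).trans (congrArg (p ≫ ·) (prod.lift_fst μ₁' μ₂'))).symm.trans (this.trans ((Category.assoc _ _ _).trans (congrArg (q ≫ ·) (prod.lift_fst μ₁' μ₂'))))
    · have := congrArg (· ≫ (prod.snd : Y ⨯ Y ⟶ Y)) h
      exact ((Category.assoc _ _ _).trans (congrArg (p ≫ ·) (prod.lift_snd μ₁' μ₂'))).symm.trans (this.trans ((Category.assoc _ _ _).trans (congrArg (q ≫ ·) (prod.lift_snd μ₁' μ₂'))))
  have hsq : e' ≫ m' = e ≫ m := by
    rw [hem, hm'def, prod.comp_lift, he1', he2']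
  have sq1 : CommSq e' e m' m := ⟨hsq⟩
  have sq2 : CommSq e e' m m' := ⟨hsq.symm⟩
  refine ⟨⟨sq1.lift, sq2.lift, ?_, ?_⟩, sq1.fac_left, ?_, ?_⟩
  · apply (cancel_epi e).mp
    rw [← Category.assoc, sq1.fac_left, sq2.fac_left, Category.comp_id]
  · apply (cancel_epi e').mp
    rw [← Category.assoc, sq2.fac_left, sq1.fac_left, Category.comp_id]
  · rw [hμ₁]
    have : sq1.lift ≫ m' ≫ prod.fst = m ≫ prod.fst := by
      rw [← Category.assoc, sq1.fac_right]
    exact (congrArg (sq1.lift ≫ ·) (prod.lift_fst μ₁' μ₂')).symm.trans this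
  · rw [hμ₂]
    have : sq1.lift ≫ m' ≫ prod.snd = m ≫ prod.snd := by
      rw [← Category.assoc, sq1.fac_right]
    exact (congrArg (sq1.lift ≫ ·) (prod.lift_snd μ₁' μ₂')).symm.trans this
end

section
/- In a regular multi-pointed category C, the following are equivalent: (i) every regular epimorphism is saturating; (ii) every regular diamond in which the right edge is an identity (i.e. a commuting square f = g∘e with e, f, g regular epimorphisms and identity on the right) is right saturated. -/
open CategoryTheory CategoryTheory.Limits

universe v u

open CategoryTheory CategoryTheory.Limits StarReg in
/-- In a regular multi-pointed category, every regular epimorphism is saturating iff every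
regular diamond with identity right edge is right saturated. -/
theorem statement3 {C : Type u} [Category.{v} C] (N : MorphismProperty C)
    (hfl : HasFiniteLimits C) (hN : IsIdealClass N) (hker : HasNKernels N)
    (hfac : RegEpiMonoFactorisations C) (hpb : RegEpisPullbackStable C) :
    (∀ ⦃X Y : C⦄ (f : X ⟶ Y), Nonempty (RegularEpi f) → Saturating N f) ↔
    (∀ ⦃X Y Z : C⦄ (e : X ⟶ Z) (f : X ⟶ Y) (g : Z ⟶ Y),
      Nonempty (RegularEpi e) → Nonempty (RegularEpi f) → Nonempty (RegularEpi g) →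
      e ≫ g = f → RightSaturated N e f g (𝟙 Y)) := by
  constructor
  · -- saturating ⇒ right saturated diamonds
    intro hsat X Y Z e f g he hf hg hcomm s t hs ht
    obtain ⟨hmono, p, hp, hpa, hpb⟩ := ht
    -- t.a = t.b
    have habt : t.a = t.b := by
      haveI := RegularEpi.epi p hp.some
      have h1 : s.a ≫ e = s.b ≫ e := hs.1
      have h2 : p ≫ t.a = p ≫ t.b := by
        rw [hpa, hpb, ← hcomm, ← Category.assoc, h1, Category.assoc]
      exact (cancel_epi p).mp h2
    -- build Δ*_X
    obtain ⟨K, k, hk⟩ := hker (𝟙 X)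
    have hNk : N k := by simpa using hk.1
    set δ : StarReg.Star N X := ⟨K, k, k, hNk⟩ with hδ
    -- δ ≤ s since δ.a ≫ e = δ.b ≫ e
    obtain ⟨m0, ⟨hm0a, hm0b⟩, -⟩ := hs.2 δ rfl
    -- factor m0 ≫ p
    obtain ⟨I, q, j, hq, hj, hqj⟩ := hfac (m0 ≫ p)
    haveI := hj
    -- image of δ along f
    set t1 : StarReg.Star N Y := ⟨I, j ≫ t.a, j ≫ t.b, hN.2 j t.a t.ha⟩ with ht1
    have hqa : q ≫ t1.a = δ.a ≫ f := by
      show q ≫ (j ≫ t.a) = k ≫ f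
      rw [← Category.assoc, hqj, Category.assoc, hpa, ← Category.assoc, hm0a]
    have hqb : q ≫ t1.b = δ.b ≫ f := by
      show q ≫ (j ≫ t.b) = k ≫ f
      rw [← Category.assoc, hqj, Category.assoc, hpb, ← Category.assoc, hm0b]
    have himg : IsImageFact f δ t1 := by
      refine ⟨?_, q, hq, hqa, hqb⟩
      intro W u v hua hub
      have : u ≫ j = v ≫ j := hmono (u ≫ j) (v ≫ j)
        (by simpa [Category.assoc] using hua) (by simpa [Category.assoc] using hub)
      exact (cancel_mono j).mp this
    have hδstar : IsDeltaStar δ := ⟨rfl, by simpa using hk⟩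
    have ht1Δ : IsDeltaStar t1 := hsat f hf δ t1 hδstar himg
    -- conclude t is the kernel star of 𝟙 Y
    refine ⟨by simp [habt], ?_⟩
    intro u hu
    have huab : u.a = u.b := by simpa using hu
    have hNu : N (u.a ≫ 𝟙 Y) := hN.1 u.a (𝟙 Y) u.ha
    obtain ⟨μ, hμ, -⟩ := ht1Δ.2.2 u.a hNu
    refine ⟨μ ≫ j, ⟨?_, ?_⟩, ?_⟩
    · rw [Category.assoc]; exact hμ
    · have : (t1.a : _ ⟶ Y) = t1.b := ht1Δ.1
      have hb : μ ≫ (j ≫ t.b) = u.a := by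
        rw [show (j ≫ t.b : _ ⟶ Y) = t1.b from rfl, ← this]; exact hμ
      rw [Category.assoc, hb, huab]
    · rintro ν ⟨hνa, hνb⟩
      refine hmono ν (μ ≫ j) ?_ ?_
      · rw [hνa, Category.assoc]; exact hμ.symm
      · have : (t1.a : _ ⟶ Y) = t1.b := ht1Δ.1
        have hb : μ ≫ (j ≫ t.b) = u.a := by
          rw [show (j ≫ t.b : _ ⟶ Y) = t1.b from rfl, ← this]; exact hμ
        rw [Category.assoc, hb, hνb]
        exact huab.symm
  · -- right saturated diamonds ⇒ saturating
    intro hdia X Y f hf s t hs ht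
    have hid : Nonempty (RegularEpi (𝟙 X)) := ⟨RegularEpi.ofIso (Iso.refl X)⟩
    have hRS := hdia (𝟙 X) f f hid hf hf (Category.id_comp f)
    -- s is a kernel star of 𝟙 X
    have hks : IsKernelStar (𝟙 X) s := by
      obtain ⟨hab, hNker⟩ := hs
      refine ⟨by rw [hab], ?_⟩
      intro u hu
      have huab : u.a = u.b := by simpa using hu
      obtain ⟨μ, hμ, hμu⟩ := hNker.2 u.a (hN.1 u.a (𝟙 X) u.ha)
      refine ⟨μ, ⟨hμ, by rw [← hab, hμ, huab]⟩, ?_⟩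
      rintro ν ⟨hνa, -⟩
      exact hμu ν hνa
    have hkt : IsKernelStar (𝟙 Y) t := hRS s t hks ht
    -- a kernel star of 𝟙 Y is a Δ*
    have habt : t.a = t.b := by simpa using hkt.1
    refine ⟨habt, hN.1 t.a (𝟙 Y) t.ha, ?_⟩
    intro L g hg
    have hNg : N g := by simpa using hg
    obtain ⟨μ, ⟨hμa, -⟩, hμu⟩ := hkt.2 ⟨L, g, g, hNg⟩ (by simp)
    refine ⟨μ, hμa, ?_⟩
    intro ν hν
    exact hμu ν ⟨hν, by rw [← habt]; exact hν⟩
end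

section
/- Let (C, N) be a regular multi-pointed category with N-kernels, coequalisers of kernel stars, and such that every regular diamond with identity right edge is left saturated. Then C is star-regular if and only if a morphism m : U → V is a monomorphism precisely when its kernel star M* equals the star Δ*_U of the discrete relation on U. -/
open CategoryTheory CategoryTheory.Limits

universe v u

namespace StarReg

variable {C : Type u} [Category.{v} C]

section Helpers

variable {C : Type u} [Category.{v} C] {N : MorphismProperty C}

/-- N-kernels are monomorphisms. -/
lemma nker_mono (hN : IsIdealClass N) {K X Y : C} {k : K ⟶ X} {f : X ⟶ Y}
    (h : IsNKernel N k f) : Mono k := by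
  refine ⟨fun {W} u v huv => ?_⟩
  have h1 : N ((u ≫ k) ≫ f) := by rw [Category.assoc]; exact hN.2 _ _ h.1
  obtain ⟨μ, -, hu⟩ := h.2 (u ≫ k) h1
  rw [hu u rfl, hu v huv.symm]

/-- Every morphism has a kernel star. -/
lemma exists_kernelStar (hfl : HasFiniteLimits C) (hN : IsIdealClass N)
    (hker : HasNKernels N) {X Y : C} (f : X ⟶ Y) :
    ∃ s : Star N X, IsKernelStar f s := by
  haveI := hfl
  obtain ⟨K, k, hk⟩ := hker (pullback.fst f f)
  refine ⟨⟨K, k ≫ pullback.fst f f, k ≫ pullback.snd f f, hk.1⟩, ?_, ?_⟩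
  · simp only [Category.assoc, pullback.condition]
  · intro t ht
    have hw : N (pullback.lift t.a t.b ht ≫ pullback.fst f f) := by
      rw [pullback.lift_fst]; exact t.ha
    obtain ⟨μ, hμ, huniq⟩ := hk.2 _ hw
    refine ⟨μ, ⟨?_, ?_⟩, ?_⟩
    · show μ ≫ k ≫ pullback.fst f f = t.a
      rw [← Category.assoc, hμ, pullback.lift_fst]
    · show μ ≫ k ≫ pullback.snd f f = t.b
      rw [← Category.assoc, hμ, pullback.lift_snd]
    · intro v hv
      apply huniq
      apply pullback.hom_ext
      · rw [Category.assoc, pullback.lift_fst]; exact hv.1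
      · rw [Category.assoc, pullback.lift_snd]; exact hv.2

/-- A star coequaliser is a regular epimorphism. -/
noncomputable def starCoeqRegEpi {X Q : C} {s : Star N X} {q : X ⟶ Q}
    (h : IsStarCoequalizer s q) : RegularEpi q where
  W := s.T
  left := s.a
  right := s.b
  w := h.1
  isColimit := Cofork.IsColimit.mk _
    (fun c => (h.2 c.π c.condition).choose)
    (fun c => (h.2 c.π c.condition).choose_spec.1)
    (fun c m hm => (h.2 c.π c.condition).choose_spec.2 m hm)

lemma starCoeq_epi {X Q : C} {s : Star N X} {q : X ⟶ Q}
    (h : IsStarCoequalizer s q) : Epi q := by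
  haveI := isRegularEpi_of_regularEpi (starCoeqRegEpi h); infer_instance

/-- If `N (e ≫ n)` with `e` a regular epi, then `N n`. -/
lemma N_of_regEpi_comp (hN : IsIdealClass N) (hker : HasNKernels N)
    {X Z Q : C} {e : X ⟶ Z} {n : Z ⟶ Q} (he : RegularEpi e) (h : N (e ≫ n)) : N n := by
  obtain ⟨K, k, hk⟩ := hker (𝟙 Q)
  haveI : Mono k := nker_mono hN hk
  have h1 : N ((e ≫ n) ≫ 𝟙 Q) := by rwa [Category.comp_id]
  obtain ⟨μ, hμ, -⟩ := hk.2 (e ≫ n) h1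
  haveI := isRegularEpi_of_regularEpi he
  have sq : CommSq μ e k n := ⟨hμ⟩
  have : sq.lift ≫ k = n := sq.fac_right
  rw [← this]
  apply hN.2
  have := hk.1; rwa [Category.comp_id] at this

/-- Two kernel stars of the same morphism: delta transfers. -/
lemma deltaStar_transfer {X Y : C} {m : X ⟶ Y} {t t' : Star N X}
    (ht : IsKernelStar m t) (ht' : IsKernelStar m t') (hd : IsDeltaStar t') :
    IsDeltaStar t := by
  obtain ⟨u, ⟨hu1, hu2⟩, -⟩ := ht'.2 t ht.1
  obtain ⟨u', ⟨hu'1, hu'2⟩, -⟩ := ht.2 t' ht'.1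
  have huu' : u ≫ u' = 𝟙 t.T := by
    obtain ⟨v, hv, hvu⟩ := ht.2 t ht.1
    rw [hvu (u ≫ u') ⟨by rw [Category.assoc, hu'1, hu1], by rw [Category.assoc, hu'2, hu2]⟩,
      hvu (𝟙 t.T) ⟨Category.id_comp _, Category.id_comp _⟩]
  have hab : t.a = t.b := by rw [← hu1, ← hu2, hd.1]
  refine ⟨hab, ?_, ?_⟩
  · rw [Category.comp_id]; exact t.ha
  · intro L g hg
    rw [Category.comp_id] at hg
    have hg' : N (g ≫ 𝟙 X) := by rwa [Category.comp_id]
    obtain ⟨μ, hμ, hμu⟩ := hd.2.2 g hg'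
    refine ⟨μ ≫ u', ?_, ?_⟩
    · show (μ ≫ u') ≫ t.a = g
      rw [Category.assoc, hu'1]; exact hμ
    · intro ν hν
      have hνu : ν ≫ u = μ := hμu (ν ≫ u)
        (by show (ν ≫ u) ≫ t'.a = g; rw [Category.assoc, hu1]; exact hν)
      show ν = μ ≫ u'
      rw [← hνu, Category.assoc, ← Category.assoc, Category.assoc, huu', Category.comp_id]

/-- A kernel star of `e` is a kernel star of `e ≫ n` when `n` is mono. -/
lemma kernelStar_comp_mono {X Z Y : C} {e : X ⟶ Z} {n : Z ⟶ Y} (hn : Mono n)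
    {s : Star N X} (hs : IsKernelStar e s) : IsKernelStar (e ≫ n) s := by
  haveI := hn
  constructor
  · rw [← Category.assoc, ← Category.assoc, hs.1]
  · intro t ht
    apply hs.2
    have h2 : (t.a ≫ e) ≫ n = (t.b ≫ e) ≫ n := by
      simpa only [Category.assoc] using ht
    exact (cancel_mono n).1 h2

/-- If `f = q ≫ m` with `f` regular epi and `q` epi, then `m` is regular epi. -/
noncomputable def regEpiOfComp {X Q Y : C} {q : X ⟶ Q} {m : Q ⟶ Y} {f : X ⟶ Y}
    (hf : RegularEpi f) (hq : Epi q) (hqm : q ≫ m = f) : RegularEpi m where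
  W := hf.W
  left := hf.left ≫ q
  right := hf.right ≫ q
  w := by rw [Category.assoc, Category.assoc, hqm]; exact hf.w
  isColimit := by
    haveI := isRegularEpi_of_regularEpi hf; haveI := hq
    apply Cofork.IsColimit.mk'
    intro c
    have hc : hf.left ≫ (q ≫ c.π) = hf.right ≫ (q ≫ c.π) := by
      simpa only [Category.assoc] using c.condition
    have hπ : f ≫ Cofork.IsColimit.desc hf.isColimit (q ≫ c.π) hc = q ≫ c.π :=
      Cofork.IsColimit.π_desc' hf.isColimit _ _
    refine ⟨Cofork.IsColimit.desc hf.isColimit (q ≫ c.π) hc, ?_, ?_⟩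
    · show m ≫ _ = c.π
      have h1 : q ≫ m ≫ Cofork.IsColimit.desc hf.isColimit (q ≫ c.π) hc = q ≫ c.π := by
        rw [← Category.assoc, hqm]; exact hπ
      exact (cancel_epi q).1 h1
    · intro v hv
      have hv' : m ≫ v = c.π := hv
      have h3 : f ≫ v = q ≫ c.π := by
        calc f ≫ v = (q ≫ m) ≫ v := by rw [hqm]
          _ = q ≫ (m ≫ v) := Category.assoc _ _ _
          _ = q ≫ c.π := by rw [hv']
      have h2 : f ≫ v = f ≫ Cofork.IsColimit.desc hf.isColimit (q ≫ c.π) hc := by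
        rw [hπ]; exact h3
      exact (cancel_epi f).1 h2

end Helpers

end StarReg

open CategoryTheory CategoryTheory.Limits StarReg in
/-- Characterisation of star-regularity: given left saturation of regular diamonds with
identity right edge, the category is star-regular iff monomorphisms are exactly the
morphisms whose kernel star is `Δ*`. -/
theorem statement4 {C : Type u} [Category.{v} C] (N : MorphismProperty C)
    (hfl : HasFiniteLimits C) (hN : IsIdealClass N) (hker : HasNKernels N)
    (hfac : RegEpiMonoFactorisations C) (hpb : RegEpisPullbackStable C)
    (hcoeq : HasKernelStarCoequalizers N)
    (hls : ∀ ⦃X Y Z : C⦄ (e : X ⟶ Z) (f : X ⟶ Y) (g : Z ⟶ Y),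
      Nonempty (RegularEpi e) → Nonempty (RegularEpi f) → Nonempty (RegularEpi g) →
      e ≫ g = f → LeftSaturated N e f g (𝟙 Y)) :
    RegEpisAreStarCoequalizers N ↔
    (∀ ⦃U V : C⦄ (m : U ⟶ V),
      (Mono m ↔ ∀ s : Star N U, IsKernelStar m s → IsDeltaStar s)) := by
  constructor
  · intro hreg U V m
    constructor
    · intro hm s hs
      have hab : s.a = s.b := by
        haveI := hm; rw [← cancel_mono m]; exact hs.1
      refine ⟨hab, ?_, ?_⟩
      · rw [Category.comp_id]; exact s.ha
      · intro L g hg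
        rw [Category.comp_id] at hg
        obtain ⟨u, ⟨hu1, hu2⟩, huniq⟩ := hs.2 ⟨L, g, g, hg⟩ rfl
        refine ⟨u, hu1, ?_⟩
        intro ν hν
        exact huniq ν ⟨hν, by rw [← hab]; exact hν⟩
    · intro hdelta
      obtain ⟨Z, e, n, he, hn, hmn⟩ := hfac m
      obtain ⟨s, hs⟩ := exists_kernelStar hfl hN hker e
      have hsm : IsKernelStar m s := by rw [← hmn]; exact kernelStar_comp_mono hn hs
      have hd := hdelta s hsm
      obtain ⟨t, ht⟩ := hreg e he
      obtain ⟨u, ⟨hu1, hu2⟩, -⟩ := hs.2 t ht.1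
      have htab : t.a = t.b := by rw [← hu1, ← hu2, hd.1]
      obtain ⟨w, hw, -⟩ := ht.2 (𝟙 U) (by rw [htab])
      refine ⟨fun {W} g h hgh => ?_⟩
      have hge : g ≫ e = h ≫ e := by
        haveI := hn
        rw [← cancel_mono n, Category.assoc, Category.assoc, hmn]; exact hgh
      calc g = g ≫ e ≫ w := by rw [hw, Category.comp_id]
        _ = h ≫ e ≫ w := by rw [← Category.assoc, hge, Category.assoc]
        _ = h := by rw [hw, Category.comp_id]
  · intro hmono X Y f hf
    obtain ⟨s, hs⟩ := exists_kernelStar hfl hN hker f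
    obtain ⟨Q, q, hq⟩ := hcoeq f s hs
    obtain ⟨m, hqm, -⟩ := hq.2 f hs.1
    have hqre : RegularEpi q := starCoeqRegEpi hq
    have hqe : Epi q := starCoeq_epi hq
    obtain ⟨hfre⟩ := hf
    have hmre : RegularEpi m := regEpiOfComp hfre hqe hqm
    obtain ⟨Z, e, n, ⟨he⟩, hn, hen⟩ := hfac (s.a ≫ q)
    have hNn : N n := N_of_regEpi_comp hN hker he (by rw [hen]; exact hN.1 _ _ s.ha)
    have himg : IsImageFact q s ⟨Z, n, n, hNn⟩ := by
      refine ⟨?_, e, ⟨he⟩, hen, ?_⟩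
      · intro W u v h1 h2
        haveI := hn; rwa [cancel_mono n] at h1
      · show e ≫ n = s.b ≫ q
        rw [hen, hq.1]
    have hkt : IsKernelStar m (⟨Z, n, n, hNn⟩ : Star N Q) :=
      hls q f m ⟨hqre⟩ ⟨hfre⟩ ⟨hmre⟩ hqm s ⟨Z, n, n, hNn⟩ hs himg
    have hdt : IsDeltaStar (⟨Z, n, n, hNn⟩ : Star N Q) := by
      refine ⟨rfl, ?_, ?_⟩
      · rw [Category.comp_id]; exact hNn
      · intro L g hg
        rw [Category.comp_id] at hg
        obtain ⟨u, ⟨hu1, -⟩, huniq⟩ := hkt.2 ⟨L, g, g, hg⟩ rfl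
        exact ⟨u, hu1, fun ν hν => huniq ν ⟨hν, hν⟩⟩
    have hm : Mono m := (hmono m).2 (fun t' ht' => deltaStar_transfer ht' hkt hdt)
    have hl : hfre.left ≫ q = hfre.right ≫ q := by
      haveI := hm
      rw [← cancel_mono m, Category.assoc, Category.assoc, hqm]; exact hfre.w
    obtain ⟨d, hd⟩ : ∃ d : Y ⟶ Q, f ≫ d = q :=
      ⟨Cofork.IsColimit.desc hfre.isColimit q hl, Cofork.IsColimit.π_desc' hfre.isColimit q hl⟩
    haveI := isRegularEpi_of_regularEpi hfre
    have hdm : d ≫ m = 𝟙 Y := by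
      rw [← cancel_epi f, ← Category.assoc, hd, hqm, Category.comp_id]
    refine ⟨s, hs.1, ?_⟩
    intro W h hh
    obtain ⟨u, hu, huniq⟩ := hq.2 h hh
    refine ⟨d ≫ u, ?_, ?_⟩
    · show f ≫ d ≫ u = h
      rw [← Category.assoc, hd]; exact hu
    · intro w hw
      have hw' : f ≫ w = h := hw
      have hmw : m ≫ w = u := huniq (m ≫ w) (by show q ≫ m ≫ w = h; rw [← Category.assoc, hqm]; exact hw')
      show w = d ≫ u
      rw [← hmw, ← Category.assoc, hdm, Category.id_comp]
end

section
/- In a semi-abelian category, for a normal monomorphism (kernel) k : K → A with cokernel f : A → A/K and any monomorphism m : M → A, the inverse image f⁻¹(f(M)) is the supremum of K and M in the lattice of subobjects of A. -/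
open CategoryTheory CategoryTheory.Limits

universe v u

namespace PtReg

variable {C : Type u} [Category.{v} C] [HasZeroMorphisms C]

/-- `k` is a kernel of `f` in the pointed sense. -/
def IsPKernel {K X Y : C} (k : K ⟶ X) (f : X ⟶ Y) : Prop :=
  k ≫ f = 0 ∧ ∀ ⦃L : C⦄ (g : L ⟶ X), g ≫ f = 0 → ∃! u : L ⟶ K, u ≫ k = g

/-- `q` is a cokernel of `k` in the pointed sense. -/
def IsPCokernel {K X Q : C} (k : K ⟶ X) (q : X ⟶ Q) : Prop :=
  k ≫ q = 0 ∧ ∀ ⦃W : C⦄ (h : X ⟶ W), k ≫ h = 0 → ∃! u : Q ⟶ W, q ≫ u = h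

/-- A normal monomorphism: a kernel of some morphism. -/
def IsNormalMonoP {K X : C} (k : K ⟶ X) : Prop :=
  ∃ (Y : C) (f : X ⟶ Y), IsPKernel k f

/-- Every regular epimorphism is a normal epimorphism (a cokernel). -/
def RegEpisAreNormal (C : Type u) [Category.{v} C] [HasZeroMorphisms C] : Prop :=
  ∀ ⦃X Y : C⦄ (f : X ⟶ Y), Nonempty (RegularEpi f) →
    ∃ (K : C) (k : K ⟶ X), IsPCokernel k f

/-- A normal category: pointed regular, every regular epi normal. -/
def NormalCat (C : Type u) [Category.{v} C] [HasZeroMorphisms C] : Prop :=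
  StarReg.RegEpiMonoFactorisations C ∧ StarReg.RegEpisPullbackStable C ∧ RegEpisAreNormal C

/-- An internal equivalence relation. -/
def IsEquivRelPair {R X : C} (r1 r2 : R ⟶ X) : Prop :=
  (∀ ⦃W : C⦄ (u v : W ⟶ R), u ≫ r1 = v ≫ r1 → u ≫ r2 = v ≫ r2 → u = v) ∧
  (∃ d : X ⟶ R, d ≫ r1 = 𝟙 X ∧ d ≫ r2 = 𝟙 X) ∧
  (∃ s : R ⟶ R, s ≫ r1 = r2 ∧ s ≫ r2 = r1) ∧
  (∀ ⦃P : C⦄ (p1 p2 : P ⟶ R), IsPullback p1 p2 r2 r1 →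
    ∃ t : P ⟶ R, t ≫ r1 = p1 ≫ r1 ∧ t ≫ r2 = p2 ≫ r2)

/-- Barr-exactness: every equivalence relation is effective (a kernel pair). -/
def EquivRelsEffective (C : Type u) [Category.{v} C] : Prop :=
  ∀ ⦃R X : C⦄ (r1 r2 : R ⟶ X), IsEquivRelPair r1 r2 →
    ∃ (Y : C) (q : X ⟶ Y), IsPullback r1 r2 q q

/-- Protomodularity in the pointed context: the split short five lemma. -/
def SplitShortFive (C : Type u) [Category.{v} C] [HasZeroMorphisms C] : Prop :=
  ∀ ⦃K A B K' A' B' : C⦄ (k : K ⟶ A) (p : A ⟶ B) (s : B ⟶ A)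
    (k' : K' ⟶ A') (p' : A' ⟶ B') (s' : B' ⟶ A')
    (κ : K ⟶ K') (α : A ⟶ A') (β : B ⟶ B'),
    IsPKernel k p → IsPKernel k' p' → s ≫ p = 𝟙 B → s' ≫ p' = 𝟙 B' →
    k ≫ α = κ ≫ k' → p ≫ β = α ≫ p' → s ≫ α = β ≫ s' →
    IsIso κ → IsIso β → IsIso α

/-- A semi-abelian category: pointed, regular, Barr-exact, protomodular
(with a zero object, finite limits and binary coproducts as instance hypotheses). -/
def SemiAbelianCat (C : Type u) [Category.{v} C] [HasZeroMorphisms C] : Prop :=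
  StarReg.RegEpiMonoFactorisations C ∧ StarReg.RegEpisPullbackStable C ∧
    EquivRelsEffective C ∧ SplitShortFive C

end PtReg


section Aux
open CategoryTheory CategoryTheory.Limits StarReg PtReg

variable {C : Type u} [Category.{v} C] [HasZeroMorphisms C]

/-- A (pointed) kernel is a monomorphism. -/
lemma auxKernelMono {K X Y : C} {k : K ⟶ X} {f : X ⟶ Y} (h : IsPKernel k f) : Mono k := by
  constructor
  intro T u v huv
  have hz : (v ≫ k) ≫ f = 0 := by rw [Category.assoc, h.1, comp_zero]
  obtain ⟨t, -, ht⟩ := h.2 (v ≫ k) hz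
  exact (ht u huv).trans (ht v rfl).symm

/-- The pullback of a monomorphism is a monomorphism. -/
lemma auxPullbackMono {P X Y Z : C} {fst : P ⟶ X} {snd : P ⟶ Y} {f : X ⟶ Z} {g : Y ⟶ Z}
    (hP : IsPullback fst snd f g) (hf : Mono f) : Mono snd := by
  constructor
  intro T a b hab
  refine hP.hom_ext ?_ hab
  have : (a ≫ fst) ≫ f = (b ≫ fst) ≫ f := by
    rw [Category.assoc, Category.assoc, hP.w, ← Category.assoc, ← Category.assoc, hab]
  rw [cancel_mono f] at this
  exact this

end Aux

open CategoryTheory CategoryTheory.Limits StarReg PtReg in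
/-- In a semi-abelian category, for a kernel `k : K ⟶ A` with cokernel `f` and a mono
`m : M ⟶ A`, the inverse image `f⁻¹(f(M))` is the supremum of `K` and `M` among
subobjects of `A`. -/
theorem statement6 {C : Type u} [Category.{v} C] [HasZeroMorphisms C] [HasZeroObject C]
    [HasBinaryCoproducts C] (hfl : HasFiniteLimits C) (hsa : SemiAbelianCat C)
    -- the kernel `k` with cokernel `f`
    {K A Q : C} (k : K ⟶ A) (hk : IsNormalMonoP k)
    (f : A ⟶ Q) (hf : IsPCokernel k f)
    -- the monomorphism `m`
    {M : C} (m : M ⟶ A) (hm : Mono m)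
    -- the regular image `f(M)`: `m ≫ f = e ≫ n`
    {FM : C} (e : M ⟶ FM) (n : FM ⟶ Q) (he : Nonempty (RegularEpi e)) (hn : Mono n)
    (hfact : e ≫ n = m ≫ f)
    -- the inverse image `P = f⁻¹(f(M))`
    {P : C} (pI : P ⟶ FM) (pA : P ⟶ A) (hP : IsPullback pI pA n f) :
    Mono pA ∧
    (∃ iK : K ⟶ P, iK ≫ pA = k) ∧
    (∃ iM : M ⟶ P, iM ≫ pA = m) ∧
    (∀ ⦃L : C⦄ (l : L ⟶ A), Mono l →
      (∃ jK : K ⟶ L, jK ≫ l = k) → (∃ jM : M ⟶ L, jM ≫ l = m) →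
      ∃ jP : P ⟶ L, jP ≫ l = pA) := by
  haveI : HasFiniteLimits C := hfl
  obtain ⟨re⟩ := he
  obtain ⟨Y0, f0, hk0⟩ := hk
  haveI monoK : Mono k := auxKernelMono hk0
  -- `k` is a kernel of its own cokernel `f`
  have hkf : IsPKernel k f := by
    obtain ⟨u0, hu0, -⟩ := hf.2 f0 hk0.1
    refine ⟨hf.1, fun T g hg => ?_⟩
    exact hk0.2 g (by rw [← hu0, ← Category.assoc, hg, zero_comp])
  have monoPA : Mono pA := auxPullbackMono hP hn
  refine ⟨monoPA, ⟨hP.lift 0 k (by rw [zero_comp, hkf.1]), hP.lift_snd _ _ _⟩,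
    ⟨hP.lift e m hfact, hP.lift_snd _ _ _⟩, ?_⟩
  rintro L l hl ⟨jK, hjK⟩ ⟨jM, hjM⟩
  -- image factorisation of `l ≫ f`
  obtain ⟨FL, e', n', ⟨re'⟩, hn', hfac'⟩ := hsa.1 (l ≫ f)
  haveI := hn'
  haveI := hl
  haveI monoJK : Mono jK := by
    haveI : Mono (jK ≫ l) := by rw [hjK]; exact monoK
    exact mono_of_mono jK l
  have hjKe' : jK ≫ e' = 0 := by
    rw [← cancel_mono n', Category.assoc, hfac', ← Category.assoc, hjK, hkf.1, zero_comp]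
  -- `jK` is a kernel of `e'`
  have hker_jK : IsPKernel jK e' := by
    refine ⟨hjKe', fun T g hg => ?_⟩
    have hglf : (g ≫ l) ≫ f = 0 := by
      rw [Category.assoc, ← hfac', ← Category.assoc, hg, zero_comp]
    obtain ⟨t, ht, -⟩ := hkf.2 (g ≫ l) hglf
    have ht' : t ≫ jK = g := by
      rw [← cancel_mono l, Category.assoc, hjK, ht]
    exact ⟨t, ht', fun y hy => by rw [← cancel_mono jK, hy, ht']⟩
  -- the pullback `P' = f⁻¹(FL)`
  let P' := pullback n' f
  let p'I : P' ⟶ FL := pullback.fst n' f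
  let p'A : P' ⟶ A := pullback.snd n' f
  have hP' : IsPullback p'I p'A n' f := IsPullback.of_hasPullback n' f
  haveI monoP'A : Mono p'A := auxPullbackMono hP' hn'
  let u : L ⟶ P' := hP'.lift e' l hfac'
  have huI : u ≫ p'I = e' := hP'.lift_fst _ _ _
  have huA : u ≫ p'A = l := hP'.lift_snd _ _ _
  haveI monoU : Mono u := by
    haveI : Mono (u ≫ p'A) := by rw [huA]; exact hl
    exact mono_of_mono u p'A
  let κ'' : K ⟶ P' := hP'.lift 0 k (by rw [zero_comp, hkf.1])
  have hκI : κ'' ≫ p'I = 0 := hP'.lift_fst _ _ _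
  have hκA : κ'' ≫ p'A = k := hP'.lift_snd _ _ _
  haveI monoκ : Mono κ'' := by
    haveI : Mono (κ'' ≫ p'A) := by rw [hκA]; exact monoK
    exact mono_of_mono κ'' p'A
  have hjKu : jK ≫ u = κ'' := by
    refine hP'.hom_ext ?_ ?_
    · rw [Category.assoc, huI, hjKe', hκI]
    · rw [Category.assoc, huA, hjK, hκA]
  -- `κ''` is a kernel of `p'I`
  have hker_κ : IsPKernel κ'' p'I := by
    refine ⟨hκI, fun T g hg => ?_⟩
    have : (g ≫ p'A) ≫ f = 0 := by
      rw [Category.assoc, ← hP'.w, ← Category.assoc, hg, zero_comp]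
    obtain ⟨t, ht, -⟩ := hkf.2 (g ≫ p'A) this
    have ht' : t ≫ κ'' = g := by
      refine hP'.hom_ext ?_ ?_
      · rw [Category.assoc, hκI, comp_zero, hg]
      · rw [Category.assoc, hκA, ht]
    exact ⟨t, ht', fun y hy => by rw [← cancel_mono κ'', hy, ht']⟩
  -- kernel pair `D` of `e'`
  let D := pullback e' e'
  let d1 : D ⟶ L := pullback.fst e' e'
  let d2 : D ⟶ L := pullback.snd e' e'
  have hD : IsPullback d1 d2 e' e' := IsPullback.of_hasPullback e' e'
  let δ : L ⟶ D := hD.lift (𝟙 L) (𝟙 L) rfl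
  have hδ1 : δ ≫ d1 = 𝟙 L := hD.lift_fst _ _ _
  have hδ2 : δ ≫ d2 = 𝟙 L := hD.lift_snd _ _ _
  let δK : K ⟶ D := hD.lift 0 jK (by rw [zero_comp, hjKe'])
  have hδK1 : δK ≫ d1 = 0 := hD.lift_fst _ _ _
  have hδK2 : δK ≫ d2 = jK := hD.lift_snd _ _ _
  haveI monoδK : Mono δK := by
    haveI : Mono (δK ≫ d2) := by rw [hδK2]; exact monoJK
    exact mono_of_mono δK d2
  have hker_δK : IsPKernel δK d1 := by
    refine ⟨hδK1, fun T g hg => ?_⟩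
    have : (g ≫ d2) ≫ e' = 0 := by
      rw [Category.assoc, ← hD.w, ← Category.assoc, hg, zero_comp]
    obtain ⟨t, ht, -⟩ := hker_jK.2 (g ≫ d2) this
    have ht' : t ≫ δK = g := by
      refine hD.hom_ext ?_ ?_
      · rw [Category.assoc, hδK1, comp_zero, hg]
      · rw [Category.assoc, hδK2, ht]
    exact ⟨t, ht', fun y hy => by rw [← cancel_mono δK, hy, ht']⟩
  -- the pullback `E` of `p'I` along `e'`
  let E := pullback e' p'I
  let π1 : E ⟶ L := pullback.fst e' p'I
  let π2 : E ⟶ P' := pullback.snd e' p'I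
  have hE : IsPullback π1 π2 e' p'I := IsPullback.of_hasPullback e' p'I
  let σ : L ⟶ E := hE.lift (𝟙 L) u (by rw [Category.id_comp, huI])
  have hσ1 : σ ≫ π1 = 𝟙 L := hE.lift_fst _ _ _
  have hσ2 : σ ≫ π2 = u := hE.lift_snd _ _ _
  let εK : K ⟶ E := hE.lift 0 κ'' (by rw [zero_comp, hκI])
  have hεK1 : εK ≫ π1 = 0 := hE.lift_fst _ _ _
  have hεK2 : εK ≫ π2 = κ'' := hE.lift_snd _ _ _
  haveI monoεK : Mono εK := by
    haveI : Mono (εK ≫ π2) := by rw [hεK2]; exact monoκ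
    exact mono_of_mono εK π2
  have hker_εK : IsPKernel εK π1 := by
    refine ⟨hεK1, fun T g hg => ?_⟩
    have : (g ≫ π2) ≫ p'I = 0 := by
      rw [Category.assoc, ← hE.w, ← Category.assoc, hg, zero_comp]
    obtain ⟨t, ht, -⟩ := hker_κ.2 (g ≫ π2) this
    have ht' : t ≫ εK = g := by
      refine hE.hom_ext ?_ ?_
      · rw [Category.assoc, hεK1, comp_zero, hg]
      · rw [Category.assoc, hεK2, ht]
    exact ⟨t, ht', fun y hy => by rw [← cancel_mono εK, hy, ht']⟩
  -- comparison map `γ : D ⟶ E`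
  let γ : D ⟶ E := hE.lift d1 (d2 ≫ u) (by rw [Category.assoc, huI, hD.w])
  have hγ1 : γ ≫ π1 = d1 := hE.lift_fst _ _ _
  have hγ2 : γ ≫ π2 = d2 ≫ u := hE.lift_snd _ _ _
  -- the split short five lemma gives that `γ` is an isomorphism
  have hγiso : IsIso γ := by
    refine hsa.2.2.2 δK d1 δ εK π1 σ (𝟙 K) γ (𝟙 L) hker_δK hker_εK hδ1 hσ1 ?_ ?_ ?_
      inferInstance inferInstance
    · refine hE.hom_ext ?_ ?_
      · rw [Category.assoc, hγ1, hδK1, Category.assoc, hεK1, comp_zero]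
      · rw [Category.assoc, hγ2, ← Category.assoc, hδK2, hjKu, Category.assoc, hεK2,
          Category.id_comp]
    · rw [Category.comp_id, hγ1]
    · refine hE.hom_ext ?_ ?_
      · rw [Category.assoc, hγ1, hδ1, Category.id_comp, hσ1]
      · rw [Category.assoc, hγ2, ← Category.assoc, hδ2, Category.id_comp, Category.id_comp, hσ2]
  haveI := hγiso
  -- `π2` is a regular epimorphism by pullback stability
  obtain ⟨reπ2⟩ := hsa.2.1 π2 π1 p'I e' hE.flip ⟨re'⟩
  haveI := reπ2
  haveI : Epi π2 := RegularEpi.epi π2 reπ2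
  -- descend to a retraction `t` of `u`
  have hcoeq : reπ2.left ≫ (inv γ ≫ d2) = reπ2.right ≫ (inv γ ≫ d2) := by
    rw [← cancel_mono u]
    simp only [Category.assoc, ← hγ2, IsIso.inv_hom_id_assoc]
    exact reπ2.w
  obtain ⟨t, htd⟩ := Cofork.IsColimit.desc' reπ2.isColimit (inv γ ≫ d2) hcoeq
  have htd' : π2 ≫ t = inv γ ≫ d2 := by simpa using htd
  have htu : t ≫ u = 𝟙 P' := by
    rw [← cancel_epi π2, ← Category.assoc, htd', Category.assoc, ← hγ2,
      ← Category.assoc, IsIso.inv_hom_id, Category.id_comp, Category.comp_id]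
  have hut : u ≫ t = 𝟙 L := by
    rw [← cancel_mono u, Category.assoc, htu, Category.comp_id, Category.id_comp]
  -- the map `w : FM ⟶ FL` comparing the two images
  have hMe : jM ≫ e' ≫ n' = e ≫ n := by
    rw [hfac', ← Category.assoc, hjM, ← hfact]
  have hw0 : re.left ≫ (jM ≫ e') = re.right ≫ (jM ≫ e') := by
    rw [← cancel_mono n']
    simp only [Category.assoc, hMe]
    rw [← Category.assoc, ← Category.assoc, re.w]
  obtain ⟨w, hwd⟩ := Cofork.IsColimit.desc' re.isColimit (jM ≫ e') hw0
  have hwd' : e ≫ w = jM ≫ e' := by simpa using hwd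
  haveI : RegularEpi e := re
  haveI : Epi e := RegularEpi.epi e re
  have hwn : w ≫ n' = n := by
    rw [← cancel_epi e, ← Category.assoc, hwd', Category.assoc, hfac', ← Category.assoc,
      hjM, ← hfact]
  -- the comparison `v : P ⟶ P'` and the desired map `jP := v ≫ t`
  let v : P ⟶ P' := hP'.lift (pI ≫ w) pA (by rw [Category.assoc, hwn, hP.w])
  have hvA : v ≫ p'A = pA := hP'.lift_snd _ _ _
  refine ⟨v ≫ t, ?_⟩
  have htl : t ≫ l = p'A := by
    rw [← huA, ← Category.assoc, htu]
    exact Category.id_comp _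
  rw [Category.assoc, htl, hvA]
end

section
/- (Diamond isomorphism theorem in a star-regular category) Let C be a star-regular category, κ : F* ⇉ A a kernel star with coequaliser f : A → A/F*, and m : M → A a monomorphism. Then there is an isomorphism M / (F* ∩ (M×M))* ≅ (F* ∨ₐ M) / (F* ∩ ((F*∨ₐM)×(F*∨ₐM)))*, where F* ∨ₐ M denotes the asymmetric join f⁻¹(f(M)); both quotients are isomorphic to the image f(M) as subobjects of A/F*. -/
open CategoryTheory CategoryTheory.Limits

universe v u

section Helpers
open StarReg

variable {C : Type u} [Category.{v} C] {N : MorphismProperty C}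

/-- A star coequaliser is a regular epimorphism. -/
noncomputable def regularEpiOfStarCoeq {X Q : C} {s : Star N X} {f : X ⟶ Q}
    (h : IsStarCoequalizer s f) : RegularEpi f where
  W := s.T
  left := s.a
  right := s.b
  w := h.1
  isColimit := Cofork.IsColimit.mk _
    (fun c => (h.2 c.π c.condition).exists.choose)
    (fun c => (h.2 c.π c.condition).exists.choose_spec)
    (fun c mfac hfac => (h.2 c.π c.condition).unique hfac
      (h.2 c.π c.condition).exists.choose_spec)

/-- If a regular epi coequalises `s` and every star it coequalises is below `s`,
then it is a star coequaliser of `s`. -/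
lemma isStarCoeq_of_max (hsr : StarRegular N) {X Y : C} (s : Star N X) (f0 : X ⟶ Y)
    (hre : Nonempty (RegularEpi f0)) (hco : s.a ≫ f0 = s.b ≫ f0)
    (hmax : ∀ t : Star N X, t.a ≫ f0 = t.b ≫ f0 → StarLE t s) :
    IsStarCoequalizer s f0 := by
  obtain ⟨s0, hs0⟩ := hsr.2.2.2.2 f0 hre
  refine ⟨hco, fun W h hh => ?_⟩
  obtain ⟨mm, hm1, hm2⟩ := hmax s0 hs0.1
  exact hs0.2 h (by rw [← hm1, ← hm2, Category.assoc, Category.assoc, hh])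

/-- Two star coequalisers of the same star are isomorphic. -/
lemma starCoeq_iso {X Q1 Q2 : C} {s : Star N X} {q1 : X ⟶ Q1} {q2 : X ⟶ Q2}
    (h1 : IsStarCoequalizer s q1) (h2 : IsStarCoequalizer s q2) :
    ∃ i : Q1 ≅ Q2, q1 ≫ i.hom = q2 := by
  obtain ⟨u, hu, huu⟩ := h1.2 q2 h2.1
  obtain ⟨v, hv, hvv⟩ := h2.2 q1 h1.1
  refine ⟨⟨u, v, ?_, ?_⟩, hu⟩
  · have := h1.2 q1 h1.1
    exact (this.unique (by rw [← Category.assoc, hu, hv]) (Category.comp_id q1))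
  · have := h2.2 q2 h2.1
    exact (this.unique (by rw [← Category.assoc, hv, hu]) (Category.comp_id q2))

end Helpers

open CategoryTheory CategoryTheory.Limits StarReg in
/-- Diamond isomorphism theorem in a star-regular category:
`M/(F* ∩ M×M)* ≅ (F* ∨ₐ M)/(F* ∩ (F*∨ₐM)²)*`, both isomorphic to `f(M)` as subobjects
of `A/F*`. -/
theorem statement8 {C : Type u} [Category.{v} C] (N : MorphismProperty C)
    (hfl : HasFiniteLimits C) (hsr : StarRegular N)
    -- a kernel star `F` on `A` with coequaliser `f : A ⟶ Q`
    {A Q : C} (F : Star N A) (f : A ⟶ Q)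
    (hF : IsKernelStar f F) (hf : IsStarCoequalizer F f)
    -- a monomorphism `m : M ⟶ A`
    {M : C} (m : M ⟶ A) (hm : Mono m)
    -- the regular image `f(M)`: `m ≫ f = e ≫ n` with `e` regular epi, `n` mono
    {FM : C} (e : M ⟶ FM) (n : FM ⟶ Q) (he : Nonempty (RegularEpi e)) (hn : Mono n)
    (hfact : e ≫ n = m ≫ f)
    -- the asymmetric join `P = F* ∨ₐ M = f⁻¹(f(M))`
    {P : C} (pI : P ⟶ FM) (pA : P ⟶ A) (hP : IsPullback pI pA n f)
    -- the restricted star `(F* ∩ (M×M))*` on `M`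
    (L : Star N M) (jL : L.T ⟶ F.T) (hL : IsStarPullback m F L jL)
    -- the restricted star `(F* ∩ ((F*∨ₐM)×(F*∨ₐM)))*` on `P`
    (T : Star N P) (jT : T.T ⟶ F.T) (hT : IsStarPullback pA F T jT)
    -- the two quotients
    {QM : C} (qM : M ⟶ QM) (hqM : IsStarCoequalizer L qM)
    {QP : C} (qP : P ⟶ QP) (hqP : IsStarCoequalizer T qP) :
    ∃ (i : QM ≅ QP) (w : QM ⟶ Q) (w' : QP ⟶ Q),
      Mono w ∧ Mono w' ∧ qM ≫ w = m ≫ f ∧ qP ≫ w' = pA ≫ f ∧ i.hom ≫ w' = w := by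
  -- `f` is a regular epi
  have hfRE : Nonempty (RegularEpi f) := ⟨regularEpiOfStarCoeq hf⟩
  -- `pI` is a regular epi (pullback of `f`)
  have hpIRE : Nonempty (RegularEpi pI) := hsr.2.2.2.1 pI pA n f hP hfRE
  -- `e` is a star coequaliser of `L`
  have heL : IsStarCoequalizer L e := by
    refine isStarCoeq_of_max hsr L e he ?_ ?_
    · have hmono := hn
      rw [← cancel_mono n, Category.assoc, Category.assoc, hfact,
        ← Category.assoc, ← Category.assoc, hL.1, hL.2.1,
        Category.assoc, Category.assoc, hF.1]
    · intro t ht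
      have htf : (t.a ≫ m) ≫ f = (t.b ≫ m) ≫ f := by
        rw [Category.assoc, Category.assoc, ← hfact, ← Category.assoc,
          ← Category.assoc, ht]
      obtain ⟨u, ⟨hu1, hu2⟩, -⟩ := hF.2 ⟨t.T, t.a ≫ m, t.b ≫ m, hsr.1.1 t.a m t.ha⟩ htf
      obtain ⟨h, ⟨hh1, hh2, -⟩, -⟩ := hL.2.2 t u hu1.symm hu2.symm
      exact ⟨h, hh1, hh2⟩
  -- `pI` is a star coequaliser of `T`
  have hpT : IsStarCoequalizer T pI := by
    refine isStarCoeq_of_max hsr T pI hpIRE ?_ ?_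
    · rw [← cancel_mono n, Category.assoc, Category.assoc, hP.w,
        ← Category.assoc, ← Category.assoc, hT.1, hT.2.1,
        Category.assoc, Category.assoc, hF.1]
    · intro t ht
      have htf : (t.a ≫ pA) ≫ f = (t.b ≫ pA) ≫ f := by
        rw [Category.assoc, Category.assoc, ← hP.w, ← Category.assoc,
          ← Category.assoc, ht]
      obtain ⟨u, ⟨hu1, hu2⟩, -⟩ := hF.2 ⟨t.T, t.a ≫ pA, t.b ≫ pA, hsr.1.1 t.a pA t.ha⟩ htf
      obtain ⟨h, ⟨hh1, hh2, -⟩, -⟩ := hT.2.2 t u hu1.symm hu2.symm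
      exact ⟨h, hh1, hh2⟩
  -- compare the coequalisers
  obtain ⟨iM, hiM⟩ := starCoeq_iso hqM heL
  obtain ⟨iP, hiP⟩ := starCoeq_iso hqP hpT
  haveI := hn
  refine ⟨iM ≪≫ iP.symm, iM.hom ≫ n, iP.hom ≫ n, mono_comp _ _, mono_comp _ _,
    ?_, ?_, ?_⟩
  · rw [← Category.assoc, hiM, hfact]
  · rw [← Category.assoc, hiP, hP.w]
  · simp
end

section
/- (Diamond isomorphism theorem in a normal category) Let C be a normal category, k : K → A a kernel with cokernel f : A → A/K, and m : M → A a monomorphism. Setting K∨M := f⁻¹(f(M)), there is an isomorphism M / (K ∩ M) ≅ (K∨M) / K. -/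
open CategoryTheory CategoryTheory.Limits

universe v u

namespace DiamondAux

open CategoryTheory CategoryTheory.Limits PtReg StarReg

variable {C : Type u} [Category.{v} C] [HasZeroMorphisms C]

lemma mono_of_pkernel {K X Y : C} {k : K ⟶ X} {f : X ⟶ Y} (h : IsPKernel k f) : Mono k := by
  constructor
  intro Z u v huv
  obtain ⟨w, -, hw⟩ := h.2 (u ≫ k) (by rw [Category.assoc, h.1, comp_zero])
  rw [hw u rfl, hw v huv.symm]

/-- If `k` is a normal mono and `f` is a cokernel of `k`, then `k` is a kernel of `f`. -/
lemma pkernel_of_coker {K X Q : C} {k : K ⟶ X} {f : X ⟶ Q}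
    (hk : IsNormalMonoP k) (hf : IsPCokernel k f) : IsPKernel k f := by
  obtain ⟨Y, g, hg⟩ := hk
  refine ⟨hf.1, ?_⟩
  intro L x hx
  obtain ⟨u, hu, -⟩ := hf.2 g hg.1
  obtain ⟨y, hy, -⟩ := hg.2 x (by rw [← hu, ← Category.assoc, hx, zero_comp])
  have : Mono k := mono_of_pkernel hg
  exact ⟨y, hy, fun z hz => (cancel_mono k).1 (hz.trans hy.symm)⟩

/-- If `f` is a cokernel of something and `i` is a kernel of `f`, then `f` is a cokernel
of `i`. -/
lemma coker_of_kernel {K' I X Q : C} {k' : K' ⟶ X} {i : I ⟶ X} {f : X ⟶ Q}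
    (hf : IsPCokernel k' f) (hi : IsPKernel i f) : IsPCokernel i f := by
  refine ⟨hi.1, ?_⟩
  intro V h hh
  obtain ⟨v, hv, -⟩ := hi.2 k' hf.1
  exact hf.2 h (by rw [← hv, Category.assoc, hh, comp_zero])

/-- A cokernel is a regular epimorphism. -/
lemma regularEpi_of_pcokernel {K X Q : C} {k : K ⟶ X} {q : X ⟶ Q}
    (h : IsPCokernel k q) : Nonempty (RegularEpi q) := by
  refine ⟨⟨K, k, 0, by simp [h.1], ?_⟩⟩
  refine Cofork.IsColimit.mk _
    (fun s => (h.2 (Cofork.π s) (by simpa using s.condition)).choose)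
    (fun s => (h.2 (Cofork.π s) (by simpa using s.condition)).choose_spec.1)
    (fun s w hw => (h.2 (Cofork.π s) (by simpa using s.condition)).choose_spec.2 w hw)

/-- Two cokernels of the same morphism have isomorphic codomains. -/
lemma pcokernel_iso {K X Q1 Q2 : C} {k : K ⟶ X} {q1 : X ⟶ Q1} {q2 : X ⟶ Q2}
    (h1 : IsPCokernel k q1) (h2 : IsPCokernel k q2) : Nonempty (Q1 ≅ Q2) := by
  obtain ⟨u, hu, -⟩ := h1.2 q2 h2.1
  obtain ⟨v, hv, -⟩ := h2.2 q1 h1.1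
  refine ⟨⟨u, v, ?_, ?_⟩⟩
  · obtain ⟨w, -, hw⟩ := h1.2 q1 h1.1
    rw [hw (u ≫ v) (show q1 ≫ (u ≫ v) = q1 by rw [← Category.assoc, hu, hv]), hw (𝟙 Q1) (Category.comp_id q1)]
  · obtain ⟨w, -, hw⟩ := h2.2 q2 h2.1
    rw [hw (v ≫ u) (show q2 ≫ (v ≫ u) = q2 by rw [← Category.assoc, hv, hu]), hw (𝟙 Q2) (Category.comp_id q2)]

end DiamondAux

open CategoryTheory CategoryTheory.Limits StarReg PtReg in
/-- Diamond isomorphism theorem in a normal category: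
`M/(K ∩ M) ≅ (K ∨ M)/K` where `K ∨ M = f⁻¹(f(M))`. -/
theorem statement9 {C : Type u} [Category.{v} C] [HasZeroMorphisms C] [HasZeroObject C]
    (hfl : HasFiniteLimits C) (hnc : NormalCat C)
    -- the kernel `k : K ⟶ A` with cokernel `f : A ⟶ Q`
    {K A Q : C} (k : K ⟶ A) (hk : IsNormalMonoP k)
    (f : A ⟶ Q) (hf : IsPCokernel k f)
    -- the monomorphism `m : M ⟶ A`
    {M : C} (m : M ⟶ A) (hm : Mono m)
    -- the regular image `f(M)`: `m ≫ f = e ≫ n`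
    {FM : C} (e : M ⟶ FM) (n : FM ⟶ Q) (he : Nonempty (RegularEpi e)) (hn : Mono n)
    (hfact : e ≫ n = m ≫ f)
    -- the join `P = K ∨ M = f⁻¹(f(M))`
    {P : C} (pI : P ⟶ FM) (pA : P ⟶ A) (hP : IsPullback pI pA n f)
    -- the induced inclusion of `K` in `P`
    (iK : K ⟶ P) (hiK : iK ≫ pA = k)
    -- the intersection `K ∩ M`
    {W : C} (wK : W ⟶ K) (wM : W ⟶ M) (hW : IsPullback wK wM k m)
    -- the quotient `M/(K ∩ M)`
    {QM : C} (qM : M ⟶ QM) (hqM : IsPCokernel wM qM)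
    -- the quotient `(K ∨ M)/K`
    {QP : C} (qP : P ⟶ QP) (hqP : IsPCokernel iK qP) :
    Nonempty (QM ≅ QP) := by
  obtain ⟨hfac, hstab, hnorm⟩ := hnc
  -- `k` is a kernel of `f`
  have hkf : IsPKernel k f := DiamondAux.pkernel_of_coker hk hf
  have hkmono : Mono k := DiamondAux.mono_of_pkernel hkf
  -- `pA` is a monomorphism
  have hpA : Mono pA := by
    constructor
    intro Z u v huv
    refine hP.hom_ext ?_ huv
    have h1 : (u ≫ pI) ≫ n = (v ≫ pI) ≫ n := by
      rw [Category.assoc, Category.assoc, hP.w, ← Category.assoc, huv, Category.assoc]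
    exact (cancel_mono n).1 h1
  -- `wM` is a monomorphism
  have hwM : Mono wM := by
    constructor
    intro Z u v huv
    refine hW.hom_ext ?_ huv
    have h1 : (u ≫ wK) ≫ k = (v ≫ wK) ≫ k := by
      rw [Category.assoc, Category.assoc, hW.w, ← Category.assoc, huv, Category.assoc]
    exact (cancel_mono k).1 h1
  -- `iK` is a monomorphism
  have hiKmono : Mono iK := by
    have : Mono (iK ≫ pA) := hiK ▸ hkmono
    exact mono_of_mono iK pA
  -- `iK` is a kernel of `pI`
  have hiKker : IsPKernel iK pI := by
    constructor
    · refine (cancel_mono n).1 ?_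
      rw [Category.assoc, hP.w, ← Category.assoc, hiK, hkf.1, zero_comp]
    · intro L x hx
      have hxf : (x ≫ pA) ≫ f = 0 := by
        rw [Category.assoc, ← hP.w, ← Category.assoc, hx, zero_comp]
      obtain ⟨y, hy, -⟩ := hkf.2 (x ≫ pA) hxf
      refine ⟨y, ?_, fun z hz => ?_⟩
      · refine (cancel_mono pA).1 ?_
        rw [Category.assoc, hiK, hy]
      · obtain ⟨y', hy', huniq⟩ := hkf.2 (x ≫ pA) hxf
        refine (cancel_mono iK).1 ?_
        rw [hz]
        refine (cancel_mono pA).1 ?_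
        rw [Category.assoc, hiK, hy]
  -- `wM` is a kernel of `e`
  have hwMker : IsPKernel wM e := by
    constructor
    · refine (cancel_mono n).1 ?_
      rw [Category.assoc, hfact, ← Category.assoc, ← hW.w, Category.assoc, hkf.1,
        comp_zero, zero_comp]
    · intro L x hx
      have hxf : (x ≫ m) ≫ f = 0 := by
        rw [Category.assoc, ← hfact, ← Category.assoc, hx, zero_comp]
      obtain ⟨y, hy, -⟩ := hkf.2 (x ≫ m) hxf
      refine ⟨hW.lift y x hy, hW.lift_snd y x hy, fun z hz => ?_⟩
      exact (cancel_mono wM).1 (hz.trans (hW.lift_snd y x hy).symm)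
  -- `f` is a regular epi, hence so is `pI` by pullback stability
  have hfreg : Nonempty (RegularEpi f) := DiamondAux.regularEpi_of_pcokernel hf
  have hpIreg : Nonempty (RegularEpi pI) := hstab pI pA n f hP hfreg
  -- `pI` is a cokernel of its kernel `iK`
  obtain ⟨K', k', hk'⟩ := hnorm pI hpIreg
  have hpIcok : IsPCokernel iK pI := DiamondAux.coker_of_kernel hk' hiKker
  -- `e` is a cokernel of its kernel `wM`
  obtain ⟨K'', k'', hk''⟩ := hnorm e he
  have hecok : IsPCokernel wM e := DiamondAux.coker_of_kernel hk'' hwMker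
  -- assemble: `QM ≅ FM ≅ QP`
  obtain ⟨i1⟩ := DiamondAux.pcokernel_iso hqM hecok
  obtain ⟨i2⟩ := DiamondAux.pcokernel_iso hpIcok hqP
  exact ⟨i1.trans i2⟩
end

section
/- (Double quotient isomorphism theorem) Let (C, N) be a star-regular category satisfying property (*). For two kernel stars F* ⇉ A and G* ⇉ A with F* ⊆ G*, letting f : A → A/F* and g : A → A/G* be their coequalisers, there is an isomorphism A/G* ≅ (A/F*) / f(G*). -/
open CategoryTheory CategoryTheory.Limits

universe v u

open CategoryTheory CategoryTheory.Limits StarReg in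
/-- Double quotient isomorphism theorem: in a star-regular category with property (*),
for kernel stars `F* ⊆ G*` on `A`, one has `A/G* ≅ (A/F*)/f(G*)`. -/
theorem statement10 {C : Type u} [Category.{v} C] (N : MorphismProperty C)
    (hfl : HasFiniteLimits C) (hsr : StarRegular N) (hps : PropertyStar N)
    {A QF QG : C} (F G : Star N A) (hFG : StarLE F G)
    (f : A ⟶ QF) (hFk : IsKernelStar f F) (hfc : IsStarCoequalizer F f)
    (g : A ⟶ QG) (hGk : IsKernelStar g G) (hgc : IsStarCoequalizer G g)
    -- the image star `f(G*)` on `A/F*`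
    (H : Star N QF) (hH : IsImageFact f G H)
    -- the quotient `(A/F*)/f(G*)`
    {QQ : C} (q : QF ⟶ QQ) (hq : IsStarCoequalizer H q) :
    ∃ i : QG ≅ QQ, g ≫ i.hom = f ≫ q := by
  obtain ⟨hHmono, e, ⟨hre⟩, hea, heb⟩ := hH
  obtain ⟨m, hma, hmb⟩ := hFG
  haveI := hre
  have hepi : Epi e := RegularEpi.epi e hre
  -- G coequalized by f ≫ q
  have hGfq : G.a ≫ (f ≫ q) = G.b ≫ (f ≫ q) := by
    rw [← Category.assoc, ← hea, ← Category.assoc, ← heb,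
      Category.assoc, Category.assoc, hq.1]
  obtain ⟨u, hu, huniq⟩ := hgc.2 (f ≫ q) hGfq
  -- F coequalized by g
  have hFg : F.a ≫ g = F.b ≫ g := by
    rw [← hma, ← hmb, Category.assoc, Category.assoc, hgc.1]
  obtain ⟨w, hw, hwuniq⟩ := hfc.2 g hFg
  -- H coequalized by w
  have hHw : H.a ≫ w = H.b ≫ w := by
    apply (cancel_epi e).mp
    rw [← Category.assoc, ← Category.assoc, hea, heb, Category.assoc, Category.assoc,
      hw, hgc.1]
  obtain ⟨v, hv, hvuniq⟩ := hq.2 w hHw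
  refine ⟨⟨u, v, ?_, ?_⟩, hu⟩
  · -- u ≫ v = 𝟙 QG
    obtain ⟨x, hx, hxuniq⟩ := hgc.2 g hgc.1
    have h1 : g ≫ (u ≫ v) = g := by
      rw [← Category.assoc, hu, Category.assoc, hv, hw]
    rw [hxuniq _ h1, hxuniq (𝟙 QG) (Category.comp_id g)]
  · -- v ≫ u = 𝟙 QQ
    obtain ⟨y, hy, hyuniq⟩ := hq.2 q hq.1
    have hwu : f ≫ (w ≫ u) = f ≫ q := by
      rw [← Category.assoc, hw, hu]
    have h2 : q ≫ (v ≫ u) = q := by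
      have : f ≫ q ≫ (v ≫ u) = f ≫ q := by
        rw [show q ≫ (v ≫ u) = w ≫ u from by rw [← Category.assoc, hv],
          ← Category.assoc, hw, hu]
      -- need f epi? use uniqueness from hfc with h := f ≫ q... need F.a ≫ (f ≫ q) = F.b ≫ (f ≫ q)
      have hFfq : F.a ≫ (f ≫ q) = F.b ≫ (f ≫ q) := by
        rw [← Category.assoc, hfc.1, Category.assoc]
      obtain ⟨z, hz, hzuniq⟩ := hfc.2 (f ≫ q) hFfq
      rw [hzuniq _ this, hzuniq q rfl]
    rw [hyuniq _ h2, hyuniq (𝟙 QQ) (Category.comp_id q)]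
end

section
/- (Double quotient isomorphism theorem in a normal category) Let C be a normal category and K → A, L → A normal monomorphisms with K ⊆ L. Let f : A → A/K be the cokernel of K → A. Then f(L) ≅ L/K and A/L ≅ (A/K) / (L/K). -/
open CategoryTheory CategoryTheory.Limits

universe v u

open CategoryTheory CategoryTheory.Limits StarReg PtReg in
/-- Double quotient isomorphism theorem in a normal category: for normal monos `K ⊆ L`
of `A`, `f(L) ≅ L/K` and `A/L ≅ (A/K)/(L/K)`. -/
theorem statement11 {C : Type u} [Category.{v} C] [HasZeroMorphisms C] [HasZeroObject C]
    (hfl : HasFiniteLimits C) (hnc : NormalCat C)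
    -- normal monos `k : K ⟶ A` and `l : L ⟶ A` with `K ⊆ L`
    {K L A : C} (k : K ⟶ A) (hk : IsNormalMonoP k) (l : L ⟶ A) (hl : IsNormalMonoP l)
    (i : K ⟶ L) (hi : i ≫ l = k)
    -- the cokernel `f : A ⟶ QK` of `k`
    {QK : C} (f : A ⟶ QK) (hf : IsPCokernel k f)
    -- the regular image `f(L)`: `l ≫ f = e ≫ n`
    {FL : C} (e : L ⟶ FL) (n : FL ⟶ QK) (he : Nonempty (RegularEpi e)) (hn : Mono n)
    (hfact : e ≫ n = l ≫ f)
    -- the quotient `L/K`: cokernel of `i : K ⟶ L`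
    {QLK : C} (qL : L ⟶ QLK) (hqL : IsPCokernel i qL)
    -- the cokernel `g : A ⟶ QL` of `l`
    {QL : C} (g : A ⟶ QL) (hg : IsPCokernel l g)
    -- the quotient `(A/K)/f(L)`: cokernel of `n : FL ⟶ QK`
    {QQ : C} (q : QK ⟶ QQ) (hq : IsPCokernel n q) :
    (∃ φ : FL ≅ QLK, e ≫ φ.hom = qL) ∧ (∃ ψ : QL ≅ QQ, g ≫ ψ.hom = f ≫ q) := by
  haveI := hfl
  obtain ⟨re⟩ := he
  haveI := re
  -- l is mono
  obtain ⟨Yl, wl, hwl⟩ := hl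
  have lmono : ∀ {W : C} (u v : W ⟶ L), u ≫ l = v ≫ l → u = v := by
    intro W u v huv
    have h0 : (u ≫ l) ≫ wl = 0 := by rw [Category.assoc, hwl.1, comp_zero]
    obtain ⟨t, -, ht⟩ := hwl.2 (u ≫ l) h0
    rw [ht u rfl, ht v huv.symm]
  -- k is a kernel of f
  obtain ⟨Yk, wk, hwk⟩ := hk
  have kker : IsPKernel k f := by
    refine ⟨hf.1, ?_⟩
    intro Lg g hg
    obtain ⟨w', hw', -⟩ := hf.2 wk hwk.1
    have : g ≫ wk = 0 := by rw [← hw', ← Category.assoc, hg, zero_comp]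
    exact hwk.2 g this
  -- e is a cokernel of m for some m
  obtain ⟨M, m, hm⟩ := hnc.2.2 e ⟨re⟩
  -- kernel of e
  let κ : kernel e ⟶ L := kernel.ι e
  have hκe : κ ≫ e = 0 := kernel.condition e
  have hmκ : kernel.lift e m hm.1 ≫ κ = m := kernel.lift_ι e m hm.1
  -- κ factors through i
  have hκlf : (κ ≫ l) ≫ f = 0 := by
    rw [Category.assoc, ← hfact, ← Category.assoc, hκe, zero_comp]
  obtain ⟨u, hu, -⟩ := kker.2 (κ ≫ l) hκlf
  have hui : u ≫ i = κ := by
    apply lmono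
    rw [Category.assoc, hi, hu]
  -- e is a cokernel of i
  have hie : i ≫ e = 0 := by
    have : (i ≫ e) ≫ n = 0 ≫ n := by
      rw [Category.assoc, hfact, ← Category.assoc, hi, hf.1, zero_comp]
    exact Mono.right_cancellation _ _ this
  have ecoker : IsPCokernel i e := by
    refine ⟨hie, ?_⟩
    intro W h hh
    have hκh : κ ≫ h = 0 := by rw [← hui, Category.assoc, hh, comp_zero]
    have hmh : m ≫ h = 0 := by rw [← hmκ, Category.assoc, hκh, comp_zero]
    exact hm.2 h hmh
  -- epimorphy of cokernels
  have fepi : ∀ {W : C} (u v : QK ⟶ W), f ≫ u = f ≫ v → u = v := by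
    intro W u v huv
    have h0 : k ≫ f ≫ u = 0 := by rw [← Category.assoc, hf.1, zero_comp]
    obtain ⟨t, -, ht⟩ := hf.2 (f ≫ u) h0
    rw [ht u rfl, ht v huv.symm]
  have qepi : ∀ {W : C} (u v : QQ ⟶ W), q ≫ u = q ≫ v → u = v := by
    intro W u v huv
    have h0 : n ≫ q ≫ u = 0 := by rw [← Category.assoc, hq.1, zero_comp]
    obtain ⟨t, -, ht⟩ := hq.2 (q ≫ u) h0
    rw [ht u rfl, ht v huv.symm]
  constructor
  · -- two cokernels of i are isomorphic
    obtain ⟨φh, hφh, -⟩ := ecoker.2 qL hqL.1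
    obtain ⟨φi, hφi, -⟩ := hqL.2 e hie
    have h1 : φh ≫ φi = 𝟙 FL := by
      obtain ⟨t, -, ht⟩ := ecoker.2 e hie
      have e1 := ht (φh ≫ φi) (by beta_reduce; rw [← Category.assoc, hφh, hφi])
      have e2 := ht (𝟙 FL) (Category.comp_id e)
      rw [e1, e2]
    have h2 : φi ≫ φh = 𝟙 QLK := by
      obtain ⟨t, -, ht⟩ := hqL.2 qL hqL.1
      have e1 := ht (φi ≫ φh) (by beta_reduce; rw [← Category.assoc, hφi, hφh])
      have e2 := ht (𝟙 QLK) (Category.comp_id qL)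
      rw [e1, e2]
    exact ⟨⟨φh, φi, h1, h2⟩, hφh⟩
  · -- f ≫ q is a cokernel of l
    have hlfq : l ≫ f ≫ q = 0 := by
      rw [← Category.assoc, ← hfact, Category.assoc, hq.1, comp_zero]
    have fqcoker : IsPCokernel l (f ≫ q) := by
      refine ⟨hlfq, ?_⟩
      intro W h hh
      have hkh : k ≫ h = 0 := by rw [← hi, Category.assoc, hh, comp_zero]
      obtain ⟨h', hh', -⟩ := hf.2 h hkh
      have hnh' : n ≫ h' = 0 := by
        have : e ≫ n ≫ h' = e ≫ 0 := by
          rw [comp_zero, ← Category.assoc, hfact, Category.assoc, hh', hh]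
        haveI hepi : Epi e := RegularEpi.epi e re
        exact Epi.left_cancellation _ _ this
      obtain ⟨h'', hh'', -⟩ := hq.2 h' hnh'
      refine ⟨h'', by beta_reduce; rw [Category.assoc, hh'', hh'], ?_⟩
      intro y hy
      apply qepi; apply fepi
      rw [← Category.assoc, ← Category.assoc, hy, Category.assoc, hh'', hh']
    obtain ⟨ψh, hψh, -⟩ := hg.2 (f ≫ q) hlfq
    obtain ⟨ψi, hψi, -⟩ := fqcoker.2 g hg.1
    have h1 : ψh ≫ ψi = 𝟙 QL := by
      obtain ⟨t, -, ht⟩ := hg.2 g hg.1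
      have e1 := ht (ψh ≫ ψi) (by beta_reduce; rw [← Category.assoc, hψh, hψi])
      have e2 := ht (𝟙 QL) (Category.comp_id g)
      rw [e1, e2]
    have h2 : ψi ≫ ψh = 𝟙 QQ := by
      obtain ⟨t, -, ht⟩ := fqcoker.2 (f ≫ q) hlfq
      have e1 := ht (ψi ≫ ψh) (by beta_reduce; rw [← Category.assoc, hψi, hψh])
      have e2 := ht (𝟙 QQ) (Category.comp_id (f ≫ q))
      rw [e1, e2]
    exact ⟨⟨ψh, ψi, h1, h2⟩, hψh⟩
end

section
/- Let C be a star-regular category satisfying property (*). Given kernel stars κ : F* ⇉ A and σ : G* ⇉ U, and a monomorphism u : U → A such that (F* ∩ (U×U))* ⊆ G*, the star F* ∨ₐ G* ⇉ F* ∨ₐ U (obtained by asymmetric join along the coequaliser f of F*) is a kernel star, and (F* ∨ₐ U) / (F* ∨ₐ G*) ≅ U / G*. -/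
open CategoryTheory CategoryTheory.Limits

universe v u

namespace StarReg

variable {C : Type u} [Category.{v} C]

/-- Any two morphisms equalised by a star-coequaliser after composition are equal. -/
lemma IsStarCoequalizer.cancel {N : MorphismProperty C} {X Q : C} {s : Star N X} {q : X ⟶ Q}
    (h : IsStarCoequalizer s q) {W : C} {x y : Q ⟶ W} (hxy : q ≫ x = q ≫ y) : x = y := by
  obtain ⟨h1, h2⟩ := h
  obtain ⟨z, _, hzu⟩ := h2 (q ≫ x)
    (by rw [← Category.assoc, h1, Category.assoc])
  rw [hzu x rfl, hzu y hxy.symm]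

/-- A star-coequaliser is a regular epimorphism. -/
noncomputable def IsStarCoequalizer.regularEpi {N : MorphismProperty C} {X Q : C}
    {s : Star N X} {q : X ⟶ Q} (h : IsStarCoequalizer s q) : RegularEpi q where
  W := s.T
  left := s.a
  right := s.b
  w := h.1
  isColimit := Cofork.IsColimit.mk _
    (fun c => (h.2 c.π c.condition).choose)
    (fun c => (h.2 c.π c.condition).choose_spec.1)
    (fun c m hm => (h.2 c.π c.condition).choose_spec.2 m hm)

end StarReg

open CategoryTheory CategoryTheory.Limits StarReg in
/-- In a star-regular category with property (*): for a kernel star `F*` on `A` with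
coequaliser `f`, a kernel star `G*` on `U` and a mono `u : U ⟶ A` with
`(F* ∩ (U×U))* ⊆ G*`, the star `F* ∨ₐ G*` on `F* ∨ₐ U` is a kernel star and
`(F* ∨ₐ U)/(F* ∨ₐ G*) ≅ U/G*`. -/
theorem statement12 {C : Type u} [Category.{v} C] (N : MorphismProperty C)
    (hfl : HasFiniteLimits C) (hsr : StarRegular N) (hps : PropertyStar N)
    -- the kernel star `F*` on `A` with coequaliser `f : A ⟶ QF`
    {A QF : C} (F : Star N A) (f : A ⟶ QF)
    (hFk : IsKernelStar f F) (hfc : IsStarCoequalizer F f)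
    -- the mono `u : U ⟶ A` and the kernel star `G*` on `U`
    {U : C} (u : U ⟶ A) (hu : Mono u)
    (G : Star N U) (hG : IsAKernelStar G)
    -- the restricted star `(F* ∩ (U×U))*` on `U`, contained in `G*`
    (R : Star N U) (jR : R.T ⟶ F.T) (hR : IsStarPullback u F R jR) (hRG : StarLE R G)
    -- the regular image `f(U)`: `u ≫ f = e₁ ≫ n₁`
    {FU : C} (e₁ : U ⟶ FU) (n₁ : FU ⟶ QF) (he₁ : Nonempty (RegularEpi e₁)) (hn₁ : Mono n₁)
    (hfact : e₁ ≫ n₁ = u ≫ f)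
    -- the asymmetric join `P = F* ∨ₐ U = f⁻¹(f(U))`
    {P : C} (pI : P ⟶ FU) (pA : P ⟶ A) (hP : IsPullback pI pA n₁ f)
    -- the image star `f'(G*)` on `f(U)` along `e₁`
    (H : Star N FU) (hH : IsImageFact e₁ G H)
    -- the star `S = F* ∨ₐ G*` on `P`: star-pullback of `H` along `pI`
    (S : Star N P) (jS : S.T ⟶ H.T) (hS : IsStarPullback pI H S jS)
    -- the quotient `U/G*`
    {QU : C} (qU : U ⟶ QU) (hqU : IsStarCoequalizer G qU) :
    IsAKernelStar S ∧
    ∀ ⦃QP : C⦄ (qP : P ⟶ QP), IsStarCoequalizer S qP → Nonempty (QP ≅ QU) := by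
  obtain ⟨hN, hker, hfctr, hpb, hrc⟩ := hsr
  obtain ⟨hRa, hRb, hRuniv⟩ := hR
  obtain ⟨hSa, hSb, hSuniv⟩ := hS
  obtain ⟨hHm, eH, heHre, heHa, heHb⟩ := hH
  haveI : Mono n₁ := hn₁
  haveI : RegularEpi e₁ := he₁.some
  haveI : RegularEpi eH := heHre.some
  -- Step A: `R` is the kernel star of `e₁`.
  have hRe : IsKernelStar e₁ R := by
    constructor
    · rw [← cancel_mono n₁, Category.assoc, Category.assoc, hfact, ← Category.assoc,
        ← Category.assoc, hRa, hRb, Category.assoc, Category.assoc, hFk.1]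
    · intro t ht
      have htf : (⟨t.T, t.a ≫ u, t.b ≫ u, hN.1 _ _ t.ha⟩ : Star N A).a ≫ f =
          (⟨t.T, t.a ≫ u, t.b ≫ u, hN.1 _ _ t.ha⟩ : Star N A).b ≫ f := by
        show (t.a ≫ u) ≫ f = (t.b ≫ u) ≫ f
        rw [Category.assoc, Category.assoc, ← hfact, ← Category.assoc, ← Category.assoc, ht]
      obtain ⟨w, hw, hwu⟩ := hFk.2 _ htf
      obtain ⟨h, hh, hhu⟩ := hRuniv t w hw.1.symm hw.2.symm
      refine ⟨h, ⟨hh.1, hh.2.1⟩, fun y hy => ?_⟩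
      have hyj : y ≫ jR = w := by
        refine hwu _ ⟨?_, ?_⟩
        · rw [Category.assoc, ← hRa, ← Category.assoc, hy.1]
        · rw [Category.assoc, ← hRb, ← Category.assoc, hy.2]
      exact hhu y ⟨hy.1, hy.2, hyj⟩
  -- Step B: `e₁` is the star-coequaliser of `R`.
  have hRc : IsStarCoequalizer R e₁ := by
    obtain ⟨s, hs⟩ := hrc e₁ he₁
    obtain ⟨m, hm, -⟩ := hRe.2 s hs.1
    refine ⟨hRe.1, fun W h hh => ?_⟩
    exact hs.2 h (by rw [← hm.1, ← hm.2, Category.assoc, Category.assoc, hh])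
  -- Step C: by property (*), `H` is a kernel star of some `w : FU ⟶ W`.
  obtain ⟨W, w, hw⟩ := hps R G e₁ hRe hRc hG hRG H ⟨hHm, eH, heHre, heHa, heHb⟩
  -- Step D: `S` is the kernel star of `pI ≫ w`.
  have hSk : IsKernelStar (pI ≫ w) S := by
    constructor
    · rw [← Category.assoc, hSa, ← Category.assoc, hSb, Category.assoc, Category.assoc, hw.1]
    · intro t ht
      have htw : (⟨t.T, t.a ≫ pI, t.b ≫ pI, hN.1 _ _ t.ha⟩ : Star N FU).a ≫ w =
          (⟨t.T, t.a ≫ pI, t.b ≫ pI, hN.1 _ _ t.ha⟩ : Star N FU).b ≫ w := by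
        show (t.a ≫ pI) ≫ w = (t.b ≫ pI) ≫ w
        rw [Category.assoc, Category.assoc, ht]
      obtain ⟨w', hw', hw'u⟩ := hw.2 _ htw
      obtain ⟨h, hh, hhu⟩ := hSuniv t w' hw'.1.symm hw'.2.symm
      refine ⟨h, ⟨hh.1, hh.2.1⟩, fun y hy => ?_⟩
      have hyj : y ≫ jS = w' := by
        refine hw'u _ ⟨?_, ?_⟩
        · rw [Category.assoc, ← hSa, ← Category.assoc, hy.1]
        · rw [Category.assoc, ← hSb, ← Category.assoc, hy.2]
      exact hhu y ⟨hy.1, hy.2, hyj⟩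
  refine ⟨⟨W, pI ≫ w, hSk⟩, fun QP qP hqP => ?_⟩
  -- `pI` is a regular epi (pullback of the regular epi `f`).
  have hpIre : Nonempty (RegularEpi pI) := hpb pI pA n₁ f hP ⟨hfc.regularEpi⟩
  -- `v : U ⟶ P` with `v ≫ pI = e₁`, `v ≫ pA = u`.
  set v : U ⟶ P := hP.lift e₁ u hfact with hvdef
  have hv1 : v ≫ pI = e₁ := hP.lift_fst e₁ u hfact
  have hv2 : v ≫ pA = u := hP.lift_snd e₁ u hfact
  -- `r : FU ⟶ QU` with `e₁ ≫ r = qU`.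
  obtain ⟨mRG, hmRG1, hmRG2⟩ := hRG
  have hRq : R.a ≫ qU = R.b ≫ qU := by
    rw [← hmRG1, ← hmRG2, Category.assoc, Category.assoc, hqU.1]
  obtain ⟨r, hr, -⟩ := hRc.2 qU hRq
  -- `H.a ≫ r = H.b ≫ r`.
  have hHr : H.a ≫ r = H.b ≫ r := by
    rw [← @cancel_epi _ _ _ _ _ eH (RegularEpi.epi eH heHre.some), ← Category.assoc, ← Category.assoc, heHa, heHb,
      Category.assoc, Category.assoc, hr, hqU.1]
  -- `ψ : QP ⟶ QU` with `qP ≫ ψ = pI ≫ r`.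
  have hSr : S.a ≫ pI ≫ r = S.b ≫ pI ≫ r := by
    rw [← Category.assoc, hSa, ← Category.assoc, hSb, Category.assoc, Category.assoc, hHr]
  obtain ⟨ψ, hψ, -⟩ := hqP.2 (pI ≫ r) hSr
  -- `φ : QU ⟶ QP` with `qU ≫ φ = v ≫ qP`.
  have hGv : G.a ≫ v ≫ qP = G.b ≫ v ≫ qP := by
    obtain ⟨h, hh, -⟩ := hSuniv ⟨G.T, G.a ≫ v, G.b ≫ v, hN.1 _ _ G.ha⟩ eH
      (by rw [Category.assoc, hv1]; exact heHa.symm)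
      (by rw [Category.assoc, hv1]; exact heHb.symm)
    have hha : h ≫ S.a = G.a ≫ v := hh.1
    have hhb : h ≫ S.b = G.b ≫ v := hh.2.1
    rw [← Category.assoc, ← Category.assoc, ← hha, ← hhb, Category.assoc, Category.assoc,
      hqP.1]
  obtain ⟨φ, hφ, -⟩ := hqU.2 (v ≫ qP) hGv
  -- `qP` factors through the regular epi `pI`: `pI ≫ t = qP`.
  obtain ⟨sP, hsP⟩ := hrc pI hpIre
  have hsPq : sP.a ≫ qP = sP.b ≫ qP := by
    obtain ⟨m, hm, -⟩ := hSk.2 sP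
      (by rw [← Category.assoc, hsP.1, Category.assoc])
    rw [← hm.1, ← hm.2, Category.assoc, Category.assoc, hqP.1]
  obtain ⟨t, htq, -⟩ := hsP.2 qP hsPq
  -- `r ≫ φ = t`.
  have hrφ : r ≫ φ = t := by
    rw [← @cancel_epi _ _ _ _ _ e₁ (RegularEpi.epi e₁ he₁.some), ← Category.assoc, hr, hφ, ← hv1, Category.assoc, htq]
  -- the two composites are identities
  have h1 : φ ≫ ψ = 𝟙 QU := by
    refine hqU.cancel ?_
    rw [← Category.assoc, hφ, Category.assoc, hψ, ← Category.assoc, hv1, hr,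
      Category.comp_id]
  have h2 : ψ ≫ φ = 𝟙 QP := by
    refine hqP.cancel ?_
    rw [← Category.assoc, hψ, Category.assoc, hrφ, htq, Category.comp_id]
  exact ⟨⟨ψ, φ, h2, h1⟩⟩
end
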